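/- Let t ≥ 1 and let G = S_3 × (Z/2Z)^t. Then d(G) = t + 1 and m(G) = t + 2. -/

import Mathlib

def IndepGen {G : Type*} [Group G] (S : Set G) : Prop :=
  Subgroup.closure S = ⊤ ∧ ∀ s ∈ S, Subgroup.closure (S \ {s}) < ⊤

noncomputable def mGen (G : Type*) [Group G] : ℕ :=
  sSup {n | ∃ S : Finset G, IndepGen (S : Set G) ∧ S.card = n}

namespace Sym3Aux

open Subgroup

abbrev GG (t : ℕ) := Equiv.Perm (Fin 3) × (Fin t → Multiplicative (ZMod 2))

def c3 : Equiv.Perm (Fin 3) := Equiv.swap 0 1 * Equiv.swap 0 2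

lemma perm3_cases (σ : Equiv.Perm (Fin 3)) :
    σ = 1 ∨ σ = Equiv.swap 0 1 ∨ σ = Equiv.swap 0 2 ∨ σ = Equiv.swap 0 1 * Equiv.swap 0 2 ∨
      σ = Equiv.swap 0 2 * Equiv.swap 0 1 ∨
      σ = Equiv.swap 0 1 * (Equiv.swap 0 2 * Equiv.swap 0 1) := by
  revert σ; decide

lemma two_cases (x : Multiplicative (ZMod 2)) : x = 1 ∨ x = Multiplicative.ofAdd 1 := by
  revert x; decide

/-- the distinguished generators -/
def va (t : ℕ) : GG t := (Equiv.swap 0 1, 1)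
def vb (t : ℕ) : GG t := (Equiv.swap 0 2, 1)
def vv (t : ℕ) (i : Fin t) : GG t := (1, Pi.mulSingle i (Multiplicative.ofAdd (1 : ZMod 2)))
def uu (t : ℕ) (i : Fin t) : GG t :=
  (if (i : ℕ) = 0 then c3 else 1, Pi.mulSingle i (Multiplicative.ofAdd (1 : ZMod 2)))

lemma single_inj (t : ℕ) :
    Function.Injective (fun i : Fin t => Pi.mulSingle i (Multiplicative.ofAdd (1 : ZMod 2))) := by
  intro i j h
  by_contra hij
  have h2 := congrFun h i
  simp only [Pi.mulSingle_eq_same, Pi.mulSingle_eq_of_ne hij] at h2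
  exact absurd h2 (by decide)

lemma vv_inj (t : ℕ) : Function.Injective (vv t) := by
  intro i j h
  exact single_inj t (congrArg Prod.snd h)

lemma uu_inj (t : ℕ) : Function.Injective (uu t) := by
  intro i j h
  exact single_inj t (congrArg Prod.snd h)

/-- If a subgroup contains the distinguished generators, it is everything. -/
lemma eq_top_of_mem (t : ℕ) {K : Subgroup (GG t)}
    (ha : va t ∈ K) (hb : vb t ∈ K) (hv : ∀ i : Fin t, vv t i ∈ K) : K = ⊤ := by
  rw [eq_top_iff]
  rintro ⟨σ, f⟩ -
  have hmulone : ∀ σ τ : Equiv.Perm (Fin 3),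
      ((σ * τ, 1) : GG t) = (σ, 1) * (τ, 1) := by
    intro σ τ; rw [Prod.mk_mul_mk, mul_one]
  have hperm : ∀ τ : Equiv.Perm (Fin 3), ((τ, 1) : GG t) ∈ K := by
    intro τ
    rcases perm3_cases τ with rfl | rfl | rfl | rfl | rfl | rfl
    · exact one_mem K
    · exact ha
    · exact hb
    · rw [hmulone]; exact mul_mem ha hb
    · rw [hmulone]; exact mul_mem hb ha
    · rw [hmulone, hmulone]; exact mul_mem ha (mul_mem hb ha)
  have hf : ((1, f) : GG t) ∈ K := by
    have hmem : f ∈ K.comap (MonoidHom.inr (Equiv.Perm (Fin 3))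
        (Fin t → Multiplicative (ZMod 2))) := by
      rw [← Finset.univ_prod_mulSingle f]
      apply prod_mem
      intro i _
      rw [Subgroup.mem_comap]
      rcases two_cases (f i) with h | h
      · rw [h, Pi.mulSingle_one, map_one]; exact one_mem K
      · rw [h]; exact hv i
    rw [Subgroup.mem_comap] at hmem
    exact hmem
  have : ((σ, f) : GG t) = (σ, 1) * (1, f) := by rw [Prod.mk_mul_mk, mul_one, one_mul]
  rw [this]
  exact mul_mem (hperm σ) hf

/-! ### Rank lower bound via the mod-2 abelianisation -/

def par (σ : Equiv.Perm (Fin 3)) : ZMod 2 :=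
  if σ = 1 ∨ σ = Equiv.swap 0 1 * Equiv.swap 0 2 ∨ σ = Equiv.swap 0 2 * Equiv.swap 0 1 then 0
  else 1

lemma par_mul : ∀ σ τ : Equiv.Perm (Fin 3), par (σ * τ) = par σ + par τ := by decide

abbrev NN (t : ℕ) := ZMod 2 × (Fin t → ZMod 2)

def pr (t : ℕ) (g : GG t) : NN t := (par g.1, fun i => (g.2 i).toAdd)

lemma pr_mul (t : ℕ) (g h : GG t) : pr t (g * h) = pr t g + pr t h :=
  Prod.ext (par_mul g.1 h.1) rfl

lemma pr_one (t : ℕ) : pr t 1 = 0 := by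
  have h1 : par 1 = 0 := by decide
  exact Prod.ext h1 rfl

lemma pr_inv (t : ℕ) (g : GG t) : pr t g⁻¹ = -pr t g := by
  have h := pr_mul t g g⁻¹
  rw [mul_inv_cancel, pr_one] at h
  linear_combination (norm := module) -h

lemma pr_surj (t : ℕ) : Function.Surjective (pr t) := by
  rintro ⟨x, f⟩
  refine ⟨(if x = 0 then 1 else Equiv.swap 0 1, fun i => Multiplicative.ofAdd (f i)), ?_⟩
  have h1 : ∀ x : ZMod 2, par (if x = 0 then 1 else Equiv.swap 0 1) = x := by decide
  exact Prod.ext (h1 x) rfl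

lemma rank_lower (t : ℕ) : t + 1 ≤ Group.rank (GG t) := by
  haveI : Fact (Nat.Prime 2) := ⟨Nat.prime_two⟩
  obtain ⟨S, hScard, hSgen⟩ := Group.rank_spec (GG t)
  have hspan : Submodule.span (ZMod 2) (Set.range fun s : S => pr t s) = ⊤ := by
    rw [eq_top_iff]
    rintro n -
    obtain ⟨g, rfl⟩ := pr_surj t n
    have hg : g ∈ Subgroup.closure (S : Set (GG t)) := hSgen ▸ Subgroup.mem_top g
    refine Subgroup.closure_induction
      (fun x hx => Submodule.subset_span ⟨⟨x, hx⟩, rfl⟩) ?_ ?_ ?_ hg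
    · rw [pr_one]; exact zero_mem _
    · intro x y _ _ px py; rw [pr_mul]; exact add_mem px py
    · intro x _ px; rw [pr_inv]; exact neg_mem px
  have hfin : Module.finrank (ZMod 2) (NN t) = t + 1 := by
    rw [Module.finrank_prod, Module.finrank_self, Module.finrank_pi]
    simp [add_comm]
  have hle := finrank_le_of_span_eq_top hspan
  rw [hfin, Fintype.card_coe, hScard] at hle
  exact hle

/-! ### Chain bound -/

lemma doubling {H : Type*} [Group H] [Finite H] {A B : Subgroup H} (hle : A ≤ B)
    (hne : ¬B ≤ A) : Nat.card A * 2 ≤ Nat.card B := by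
  have h1 : Nat.card (A.subgroupOf B) * (A.subgroupOf B).index = Nat.card B :=
    Subgroup.card_mul_index _
  have h2 : Nat.card (A.subgroupOf B) = Nat.card A :=
    Nat.card_congr (Subgroup.subgroupOfEquivOfLe hle).toEquiv
  have h3 : 1 < (A.subgroupOf B).index :=
    Subgroup.one_lt_index_of_ne_top (by rwa [Ne, Subgroup.subgroupOf_eq_top])
  calc Nat.card A * 2 = Nat.card (A.subgroupOf B) * 2 := by rw [h2]
    _ ≤ Nat.card (A.subgroupOf B) * (A.subgroupOf B).index :=
        Nat.mul_le_mul_left _ h3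
    _ = Nat.card B := h1

lemma chain_pow {H : Type*} [Group H] [Finite H] [DecidableEq H] (S : Finset H)
    (hS : ∀ s ∈ S, s ∉ Subgroup.closure ((S : Set H) \ {s})) :
    ∀ T : Finset H, T ⊆ S → 2 ^ T.card ≤ Nat.card (Subgroup.closure (T : Set H)) := by
  intro T
  induction T using Finset.induction_on with
  | empty => intro _; simp only [Finset.card_empty, pow_zero]; exact Nat.card_pos
  | @insert a T haT ih =>
    intro hsub
    have haS : a ∈ S := hsub (Finset.mem_insert_self a T)
    have hTS : T ⊆ S := fun x hx => hsub (Finset.mem_insert_of_mem hx)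
    have hanot : a ∉ Subgroup.closure (T : Set H) := by
      intro hmem
      apply hS a haS
      refine Subgroup.closure_mono (fun x hx => ?_) hmem
      exact ⟨hTS hx, fun hxa => haT (hxa ▸ hx)⟩
    have hle : Subgroup.closure (T : Set H) ≤ Subgroup.closure (↑(insert a T) : Set H) := by
      apply Subgroup.closure_mono
      rw [Finset.coe_insert]
      exact Set.subset_insert a _
    have hamem : a ∈ (↑(insert a T) : Set H) := by
      rw [Finset.coe_insert]; exact Set.mem_insert a _
    have hnle : ¬Subgroup.closure (↑(insert a T) : Set H) ≤ Subgroup.closure (T : Set H) := by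
      intro h
      exact hanot (h (Subgroup.subset_closure hamem))
    have hd := doubling hle hnle
    rw [Finset.card_insert_of_notMem haT, pow_succ]
    calc 2 ^ T.card * 2 ≤ Nat.card (Subgroup.closure (T : Set H)) * 2 :=
          Nat.mul_le_mul_right 2 (ih hTS)
      _ ≤ Nat.card (Subgroup.closure (↑(insert a T) : Set H)) := hd

lemma card_GG (t : ℕ) : Nat.card (GG t) = 6 * 2 ^ t := by
  rw [Nat.card_prod]
  have h1 : Nat.card (Equiv.Perm (Fin 3)) = 6 := by
    rw [Nat.card_eq_fintype_card, Fintype.card_perm, Fintype.card_fin]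
    decide
  have h2 : Nat.card (Fin t → Multiplicative (ZMod 2)) = 2 ^ t := by
    rw [Nat.card_fun, Nat.card_eq_fintype_card (α := Fin t), Fintype.card_fin]
    norm_num [Nat.card_eq_fintype_card]
  rw [h1, h2]

lemma mGen_bound (t : ℕ) {S : Finset (GG t)} (h : IndepGen (S : Set (GG t))) :
    S.card ≤ t + 2 := by
  classical
  obtain ⟨hgen, hind⟩ := h
  have hS : ∀ s ∈ S, s ∉ Subgroup.closure ((S : Set (GG t)) \ {s}) := by
    intro s hs hmem
    have htop : Subgroup.closure ((S : Set (GG t)) \ {s}) = ⊤ := by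
      rw [eq_top_iff, ← hgen, Subgroup.closure_le]
      intro x hx
      by_cases hxs : x = s
      · subst hxs; exact hmem
      · exact Subgroup.subset_closure ⟨hx, hxs⟩
    exact absurd htop (hind s hs).ne
  have h2 := chain_pow S hS S le_rfl
  rw [hgen] at h2
  rw [Subgroup.card_top, card_GG] at h2
  have hk : 0 < 2 ^ t := Nat.pow_pos (by norm_num)
  have hlt : (2 : ℕ) ^ S.card < 2 ^ (t + 3) := by
    calc (2 : ℕ) ^ S.card ≤ 6 * 2 ^ t := h2
      _ < 8 * 2 ^ t := by omega
      _ = 2 ^ (t + 3) := by ring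
  have := (Nat.pow_lt_pow_iff_right (by norm_num : 1 < 2)).mp hlt
  omega

/-! ### The independent generating set of size t + 2 -/

def Sm (t : ℕ) : Finset (GG t) :=
  insert (va t) (insert (vb t) (Finset.image (vv t) Finset.univ))

lemma va_ne_vb (t : ℕ) : va t ≠ vb t := by
  intro h
  rw [va, vb, Prod.mk.injEq] at h
  exact absurd h.1 (by decide)

lemma va_ne_vv (t : ℕ) (i : Fin t) : va t ≠ vv t i := by
  intro h
  rw [va, vv, Prod.mk.injEq] at h
  exact absurd h.1 (by decide)

lemma vb_ne_vv (t : ℕ) (i : Fin t) : vb t ≠ vv t i := by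
  intro h
  rw [vb, vv, Prod.mk.injEq] at h
  exact absurd h.1 (by decide)

lemma Sm_card (t : ℕ) : (Sm t).card = t + 2 := by
  classical
  rw [Sm, Finset.card_insert_of_notMem, Finset.card_insert_of_notMem,
    Finset.card_image_of_injective _ (vv_inj t), Finset.card_univ, Fintype.card_fin]
  · rintro hmem
    rw [Finset.mem_image] at hmem
    obtain ⟨i, -, hi⟩ := hmem
    exact vb_ne_vv t i hi.symm
  · rintro hmem
    rcases Finset.mem_insert.mp hmem with h | h
    · exact va_ne_vb t h
    · rw [Finset.mem_image] at h
      obtain ⟨i, -, hi⟩ := h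
      exact va_ne_vv t i hi.symm

lemma mem_Sm_iff (t : ℕ) (x : GG t) :
    x ∈ (Sm t : Set (GG t)) ↔ x = va t ∨ x = vb t ∨ ∃ i, x = vv t i := by
  simp [Sm, eq_comm]

lemma Sm_gen (t : ℕ) : Subgroup.closure (Sm t : Set (GG t)) = ⊤ := by
  apply eq_top_of_mem
  · exact Subgroup.subset_closure ((mem_Sm_iff t _).mpr (Or.inl rfl))
  · exact Subgroup.subset_closure ((mem_Sm_iff t _).mpr (Or.inr (Or.inl rfl)))
  · exact fun i => Subgroup.subset_closure ((mem_Sm_iff t _).mpr (Or.inr (Or.inr ⟨i, rfl⟩)))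

/-- removing an element from a set and landing in a proper subgroup -/
lemma closure_lt_of_le {G : Type*} [Group G] {X : Set G} {M : Subgroup G}
    (hle : X ⊆ M) (hne : M ≠ ⊤) : Subgroup.closure X < ⊤ :=
  lt_of_le_of_lt (Subgroup.closure_le M |>.mpr hle) (lt_top_iff_ne_top.mpr hne)

lemma Sm_indep (t : ℕ) : IndepGen (Sm t : Set (GG t)) := by
  refine ⟨Sm_gen t, ?_⟩
  intro s hs
  rcases (mem_Sm_iff t s).mp hs with rfl | rfl | ⟨i, rfl⟩
  · -- remove va : everything else fixes (1 : Fin 3) in the first coordinate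
    refine closure_lt_of_le (M := (MulAction.stabilizer (Equiv.Perm (Fin 3)) (1 : Fin 3)).comap
      (MonoidHom.fst (Equiv.Perm (Fin 3)) (Fin t → Multiplicative (ZMod 2)))) ?_ ?_
    · rintro x ⟨hx, hxne⟩
      simp only [SetLike.mem_coe, Subgroup.mem_comap, MulAction.mem_stabilizer_iff,
        MonoidHom.coe_fst]
      rcases (mem_Sm_iff t x).mp hx with rfl | rfl | ⟨j, rfl⟩
      · exact absurd rfl hxne
      · show Equiv.swap (0 : Fin 3) 2 • (1 : Fin 3) = 1
        decide
      · show (1 : Equiv.Perm (Fin 3)) • (1 : Fin 3) = 1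
        decide
    · intro hM
      have hva' : va t ∈ (MulAction.stabilizer (Equiv.Perm (Fin 3)) (1 : Fin 3)).comap
          (MonoidHom.fst (Equiv.Perm (Fin 3)) (Fin t → Multiplicative (ZMod 2))) :=
        hM ▸ Subgroup.mem_top _
      rw [Subgroup.mem_comap, MulAction.mem_stabilizer_iff] at hva'
      simp only [va, MonoidHom.coe_fst] at hva'
      exact absurd hva' (by decide)
  · -- remove vb : everything else fixes (2 : Fin 3)
    refine closure_lt_of_le (M := (MulAction.stabilizer (Equiv.Perm (Fin 3)) (2 : Fin 3)).comap
      (MonoidHom.fst (Equiv.Perm (Fin 3)) (Fin t → Multiplicative (ZMod 2)))) ?_ ?_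
    · rintro x ⟨hx, hxne⟩
      simp only [SetLike.mem_coe, Subgroup.mem_comap, MulAction.mem_stabilizer_iff,
        MonoidHom.coe_fst]
      rcases (mem_Sm_iff t x).mp hx with rfl | rfl | ⟨j, rfl⟩
      · show Equiv.swap (0 : Fin 3) 1 • (2 : Fin 3) = 2
        decide
      · exact absurd rfl hxne
      · show (1 : Equiv.Perm (Fin 3)) • (2 : Fin 3) = 2
        decide
    · intro hM
      have hvb' : vb t ∈ (MulAction.stabilizer (Equiv.Perm (Fin 3)) (2 : Fin 3)).comap
          (MonoidHom.fst (Equiv.Perm (Fin 3)) (Fin t → Multiplicative (ZMod 2))) :=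
        hM ▸ Subgroup.mem_top _
      rw [Subgroup.mem_comap, MulAction.mem_stabilizer_iff] at hvb'
      simp only [vb, MonoidHom.coe_fst] at hvb'
      exact absurd hvb' (by decide)
  · -- remove vv i : everything else is trivial in coordinate i of the second factor
    refine closure_lt_of_le
      (M := ((Pi.evalMonoidHom (fun _ : Fin t => Multiplicative (ZMod 2)) i).comp
        (MonoidHom.snd (Equiv.Perm (Fin 3)) (Fin t → Multiplicative (ZMod 2)))).ker) ?_ ?_
    · rintro x ⟨hx, hxne⟩
      simp only [SetLike.mem_coe, MonoidHom.mem_ker]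
      rcases (mem_Sm_iff t x).mp hx with rfl | rfl | ⟨j, rfl⟩
      · rfl
      · rfl
      · have hji : i ≠ j := by
          rintro rfl
          exact hxne rfl
        show Pi.mulSingle (M := fun _ : Fin t => Multiplicative (ZMod 2)) j
          (Multiplicative.ofAdd (1 : ZMod 2)) i = 1
        exact Pi.mulSingle_eq_of_ne hji _
    · intro hM
      have h1 : vv t i ∈ ((Pi.evalMonoidHom (fun _ : Fin t => Multiplicative (ZMod 2)) i).comp
          (MonoidHom.snd (Equiv.Perm (Fin 3)) (Fin t → Multiplicative (ZMod 2)))).ker :=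
        hM ▸ Subgroup.mem_top _
      rw [MonoidHom.mem_ker] at h1
      have h2 : Pi.mulSingle (M := fun _ : Fin t => Multiplicative (ZMod 2)) i
          (Multiplicative.ofAdd (1 : ZMod 2)) i = 1 := h1
      rw [Pi.mulSingle_eq_same] at h2
      exact absurd h2 (by decide)

/-! ### The generating set of size t + 1 -/

def Sd (t : ℕ) : Finset (GG t) := insert (va t) (Finset.image (uu t) Finset.univ)

lemma va_ne_uu (t : ℕ) (i : Fin t) : va t ≠ uu t i := by
  intro h
  have h1 := congrArg Prod.fst h
  simp only [va, uu] at h1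
  by_cases h0 : (i : ℕ) = 0
  · rw [if_pos h0] at h1
    exact absurd h1 (by decide)
  · rw [if_neg h0] at h1
    exact absurd h1 (by decide)

lemma Sd_card (t : ℕ) : (Sd t).card = t + 1 := by
  classical
  rw [Sd, Finset.card_insert_of_notMem, Finset.card_image_of_injective _ (uu_inj t),
    Finset.card_univ, Fintype.card_fin]
  rintro hmem
  rw [Finset.mem_image] at hmem
  obtain ⟨i, -, hi⟩ := hmem
  exact va_ne_uu t i hi.symm

lemma Sd_gen (t : ℕ) (ht : 1 ≤ t) : Subgroup.closure (Sd t : Set (GG t)) = ⊤ := by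
  set i0 : Fin t := ⟨0, ht⟩ with hi0
  set K := Subgroup.closure (Sd t : Set (GG t)) with hK
  have hva : va t ∈ K := Subgroup.subset_closure (by simp [Sd])
  have huu : ∀ i, uu t i ∈ K := fun i => Subgroup.subset_closure (by simp [Sd])
  have huu0 : uu t i0 = (c3, Pi.mulSingle i0 (Multiplicative.ofAdd (1 : ZMod 2))) := by
    rw [uu, if_pos rfl]
  have hvv0 : vv t i0 = (uu t i0) ^ 3 := by
    rw [huu0, vv, Prod.pow_mk, ← Pi.mulSingle_pow]
    refine Prod.ext ?_ ?_
    · show (1 : Equiv.Perm (Fin 3)) = c3 ^ 3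
      decide
    · show Pi.mulSingle (M := fun _ : Fin t => Multiplicative (ZMod 2)) i0
        (Multiplicative.ofAdd (1 : ZMod 2)) =
        Pi.mulSingle i0 ((Multiplicative.ofAdd (1 : ZMod 2)) ^ 3)
      exact congrArg _ (by decide)
  have hvv0K : vv t i0 ∈ K := hvv0 ▸ pow_mem (huu i0) 3
  have hvv : ∀ i, vv t i ∈ K := by
    intro i
    by_cases h0 : (i : ℕ) = 0
    · have : i = i0 := Fin.ext h0
      rw [this]; exact hvv0K
    · have : vv t i = uu t i := by rw [vv, uu, if_neg h0]
      rw [this]; exact huu i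
  have hc3 : ((c3, 1) : GG t) ∈ K := by
    have heq : ((c3, 1) : GG t) = uu t i0 * (vv t i0)⁻¹ := by
      rw [huu0, vv, Prod.inv_mk, Prod.mk_mul_mk, mul_inv_cancel, inv_one, mul_one]
    rw [heq]
    exact mul_mem (huu i0) (inv_mem hvv0K)
  have hvb : vb t ∈ K := by
    have heq : vb t = va t * ((c3, 1) : GG t) := by
      rw [va, vb, Prod.mk_mul_mk, mul_one]
      refine Prod.ext ?_ rfl
      show Equiv.swap 0 2 = Equiv.swap 0 1 * c3
      decide
    rw [heq]
    exact mul_mem hva hc3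
  exact eq_top_of_mem t hva hvb hvv

end Sym3Aux

open Sym3Aux in
theorem sym3_times_elementary_abelian_two (t : ℕ) (ht : 1 ≤ t) :
    Group.rank (Equiv.Perm (Fin 3) × (Fin t → Multiplicative (ZMod 2))) = t + 1 ∧
    mGen (Equiv.Perm (Fin 3) × (Fin t → Multiplicative (ZMod 2))) = t + 2 := by
  constructor
  · refine le_antisymm ?_ (rank_lower t)
    have h := Group.rank_le (Sd_gen t ht)
    rwa [Sd_card] at h
  · have hmem : t + 2 ∈ {n | ∃ S : Finset (GG t), IndepGen (S : Set (GG t)) ∧ S.card = n} :=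
      ⟨Sm t, Sm_indep t, Sm_card t⟩
    have hub : ∀ n ∈ {n | ∃ S : Finset (GG t), IndepGen (S : Set (GG t)) ∧ S.card = n},
        n ≤ t + 2 := by
      rintro n ⟨S, hS, rfl⟩
      exact mGen_bound t hS
    refine le_antisymm (csSup_le ⟨t + 2, hmem⟩ hub) (le_csSup ⟨t + 2, hub⟩ hmem)
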